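/- The family 𝔅^S = {C^S(x) ∩ B_ε(x) : x ∈ M, ε > 0} of bounded space cones in Minkowski space is a topological basis, and the topology Z^S it generates equals the intersection topology of T^≪ and the Euclidean topology T_E, i.e. Z^S is the topology generated by the family {V ∩ U : V is T^≪-open, U is T_E-open}. -/

import Mathlib

noncomputable section

open TopologicalSpace Filter

/-- Minkowski space `M = ℝ × ℝ³`. -/
abbrev Mink : Type := ℝ × EuclideanSpace ℝ (Fin 3)

/-- The Euclidean (product) topology on `M`. -/
def TE : TopologicalSpace Mink := inferInstance

/-- Time difference Δt(x,y). -/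
def dtime (x y : Mink) : ℝ := y.1 - x.1

/-- Spatial distance Δr(x,y). -/
def dspace (x y : Mink) : ℝ := ‖y.2 - x.2‖

/-- Chronological order `x ≪ y`. -/
def Chron (x y : Mink) : Prop := dspace x y < dtime x y

/-- Causal order `x ≺ y`. -/
def Causal (x y : Mink) : Prop := dspace x y ≤ dtime x y

/-- Euclidean open ball of radius ε about x. -/
def eball (x : Mink) (ε : ℝ) : Set Mink :=
  {y | Real.sqrt ((y.1 - x.1) ^ 2 + ‖y.2 - x.2‖ ^ 2) < ε}

/-- Time cone `C^T(x)`. -/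
def timeCone (x : Mink) : Set Mink := {x} ∪ {y | Chron x y ∨ Chron y x}

/-- Space cone `C^S(x)`. -/
def spaceCone (x : Mink) : Set Mink := {x} ∪ {y | |dtime x y| < dspace x y}

/-- Light cone `C^L(x)`. -/
def lightCone (x : Mink) : Set Mink := {y | y ≠ x ∧ |dtime x y| = dspace x y}

/-- Causal cone `C^J(x)`. -/
def causalCone (x : Mink) : Set Mink := {x} ∪ {y | Causal x y ∨ Causal y x}

/-- Closed space cone `K^S(x)` (space cone together with the light cone). -/
def closedSpaceCone (x : Mink) : Set Mink := {x} ∪ {y | |dtime x y| ≤ dspace x y}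

/-- Bounded time cones, the defining family of `Z^T`. -/
def BasisT : Set (Set Mink) := {S | ∃ x ε, 0 < ε ∧ S = timeCone x ∩ eball x ε}

/-- Bounded space cones, the defining family of `Z^S`. -/
def BasisS : Set (Set Mink) := {S | ∃ x ε, 0 < ε ∧ S = spaceCone x ∩ eball x ε}

/-- Balls with the light cone of the centre removed, the defining family of `Z`. -/
def BasisZ : Set (Set Mink) := {S | ∃ x ε, 0 < ε ∧ S = eball x ε \ lightCone x}

/-- Zeeman's topology `Z^T` (the Minkowski analogue of the path topology). -/
def ZT : TopologicalSpace Mink := TopologicalSpace.generateFrom BasisT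

/-- The topology `Z^S`. -/
def ZS : TopologicalSpace Mink := TopologicalSpace.generateFrom BasisS

/-- The topology `Z`. -/
def Ztop : TopologicalSpace Mink := TopologicalSpace.generateFrom BasisZ

def Jplus (x : Mink) : Set Mink := {y | Causal x y}
def Jminus (x : Mink) : Set Mink := {y | Causal y x}
def Nplus (x : Mink) : Set Mink := {y | y ≠ x ∧ dtime x y = dspace x y}
def Nminus (x : Mink) : Set Mink := {y | y ≠ x ∧ -dtime x y = dspace x y}

/-- The interval topology `T^tc` whose subbasic open sets are time cones. -/
def Ttc : TopologicalSpace Mink :=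
  TopologicalSpace.generateFrom {S | ∃ x, S = timeCone x}

/-- The interval topology `T^≪` of the irreflexive causal order. -/
def Tll : TopologicalSpace Mink :=
  TopologicalSpace.generateFrom
    ({S | ∃ x, S = Set.univ \ (Jplus x \ {x})} ∪ {S | ∃ x, S = Set.univ \ (Jminus x \ {x})})

/-- The interval topology `T^→` of irreflexive horismos. -/
def Thor : TopologicalSpace Mink :=
  TopologicalSpace.generateFrom
    ({S | ∃ x, S = Set.univ \ Nplus x} ∪ {S | ∃ x, S = Set.univ \ Nminus x})

/-- The topology `(Z^T)′` generated by bounded causal cones. -/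
def ZT' : TopologicalSpace Mink :=
  TopologicalSpace.generateFrom {S | ∃ x ε, 0 < ε ∧ S = causalCone x ∩ eball x ε}

/-- The topology `(Z^S)′` generated by bounded closed space cones. -/
def ZS' : TopologicalSpace Mink :=
  TopologicalSpace.generateFrom {S | ∃ x ε, 0 < ε ∧ S = closedSpaceCone x ∩ eball x ε}

/-- The topology `(T^tc)′` generated by causal cones. -/
def Ttc' : TopologicalSpace Mink :=
  TopologicalSpace.generateFrom {S | ∃ x, S = causalCone x}

/-- The topology `(T^≪)′` generated by closed space cones. -/
def Tll' : TopologicalSpace Mink :=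
  TopologicalSpace.generateFrom {S | ∃ x, S = closedSpaceCone x}

/-- An endless causal curve. -/
def EndlessCausalCurve (γ : ℝ → Mink) : Prop :=
  Continuous γ ∧ (∀ s t : ℝ, s < t → Causal (γ s) (γ t) ∧ γ s ≠ γ t) ∧
    (∀ c : ℝ, ∃ t, c < (γ t).1) ∧ (∀ c : ℝ, ∃ t, (γ t).1 < c)

/-- `γ` is a `T`-limit curve of the sequence `γs` of curves. -/
def IsLimitCurve (T : TopologicalSpace Mink) (γ : ℝ → Mink) (γs : ℕ → ℝ → Mink) : Prop :=
  ∃ nk : ℕ → ℕ, StrictMono nk ∧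
    ∀ p ∈ Set.range γ, ∃ pk : ℕ → Mink,
      (∀ k, pk k ∈ Set.range (γs (nk k))) ∧ Filter.Tendsto pk Filter.atTop (@nhds Mink T p)

namespace SCaux

/-- Euclidean distance on Minkowski space. -/
def dE (x y : Mink) : ℝ := Real.sqrt ((y.1 - x.1) ^ 2 + ‖y.2 - x.2‖ ^ 2)

lemma mem_eball {x y : Mink} {ε : ℝ} : y ∈ eball x ε ↔ dE x y < ε := Iff.rfl

lemma dE_self (x : Mink) : dE x x = 0 := by simp [dE]

lemma sqrt_tri (a b c d : ℝ) :
    Real.sqrt ((a+c)^2+(b+d)^2) ≤ Real.sqrt (a^2+b^2) + Real.sqrt (c^2+d^2) := by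
  have h := norm_add_le (⟨a,b⟩ : ℂ) ⟨c,d⟩
  simpa [Complex.norm_def, Complex.normSq_apply, Complex.add_re, Complex.add_im, sq] using h

lemma abs_dtime_le (x y : Mink) : |dtime x y| ≤ dE x y := by
  unfold dtime dE; rw [← Real.sqrt_sq_eq_abs]
  exact Real.sqrt_le_sqrt (le_add_of_nonneg_right (sq_nonneg _))

lemma dspace_le (x y : Mink) : dspace x y ≤ dE x y := by
  unfold dspace dE
  calc ‖y.2 - x.2‖ = Real.sqrt (‖y.2 - x.2‖ ^ 2) := (Real.sqrt_sq (norm_nonneg _)).symm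
  _ ≤ _ := Real.sqrt_le_sqrt (le_add_of_nonneg_left (sq_nonneg _))

lemma dE_triangle (x p y : Mink) : dE x y ≤ dE x p + dE p y := by
  have h1 : ‖y.2 - x.2‖ ≤ ‖p.2 - x.2‖ + ‖y.2 - p.2‖ := by
    calc ‖y.2 - x.2‖ = ‖(p.2 - x.2) + (y.2 - p.2)‖ := by rw [add_comm, sub_add_sub_cancel]
    _ ≤ _ := norm_add_le _ _
  have h2 : (y.1 - x.1 : ℝ) = (p.1 - x.1) + (y.1 - p.1) := by ring
  have h3 : ‖y.2 - x.2‖ ^ 2 ≤ (‖p.2 - x.2‖ + ‖y.2 - p.2‖) ^ 2 := by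
    nlinarith [norm_nonneg (y.2 - x.2), norm_nonneg (p.2 - x.2), norm_nonneg (y.2 - p.2)]
  unfold dE
  calc Real.sqrt ((y.1 - x.1) ^ 2 + ‖y.2 - x.2‖ ^ 2)
      ≤ Real.sqrt (((p.1 - x.1) + (y.1 - p.1)) ^ 2 + (‖p.2 - x.2‖ + ‖y.2 - p.2‖) ^ 2) := by
        rw [← h2]; exact Real.sqrt_le_sqrt (by linarith)
    _ ≤ _ := sqrt_tri _ _ _ _

lemma dspace_comm (x y : Mink) : dspace x y = dspace y x := by
  unfold dspace; rw [norm_sub_rev]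

lemma dtime_add (x p y : Mink) : dtime x y = dtime x p + dtime p y := by
  unfold dtime; ring

lemma dspace_tri (x p y : Mink) : dspace x y ≤ dspace x p + dspace p y := by
  unfold dspace
  calc ‖y.2 - x.2‖ = ‖(p.2 - x.2) + (y.2 - p.2)‖ := by rw [add_comm, sub_add_sub_cancel]
  _ ≤ _ := norm_add_le _ _

lemma dspace_lower (x p y : Mink) : dspace x p - dspace p y ≤ dspace x y := by
  have := dspace_tri x y p
  rw [dspace_comm y p] at this
  linarith

lemma mem_eball_self {x : Mink} {ε : ℝ} (hε : 0 < ε) : x ∈ eball x ε := by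
  simpa [mem_eball, dE_self] using hε

lemma eball_sub {x p : Mink} {ε : ℝ} (hp : p ∈ eball x ε) :
    0 < ε - dE x p ∧ eball p (ε - dE x p) ⊆ eball x ε := by
  rw [mem_eball] at hp
  refine ⟨by linarith, fun y hy => ?_⟩
  rw [mem_eball] at hy ⊢
  have := dE_triangle x p y
  linarith

lemma mem_spaceCone {x y : Mink} :
    y ∈ spaceCone x ↔ y = x ∨ |dtime x y| < dspace x y := by
  simp [spaceCone]

/-- Key refinement lemma. -/
lemma key {x p : Mink} {ε : ℝ} (hp : p ∈ spaceCone x ∩ eball x ε) :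
    ∃ δ > 0, spaceCone p ∩ eball p δ ⊆ spaceCone x ∩ eball x ε := by
  obtain ⟨hps, hpb⟩ := hp
  obtain ⟨hδ1, hsub1⟩ := eball_sub hpb
  rcases mem_spaceCone.mp hps with rfl | hpx
  · exact ⟨ε - dE p p, hδ1, fun y hy => ⟨hy.1, hsub1 hy.2⟩⟩
  · set c := dspace x p - |dtime x p| with hc
    have hc0 : 0 < c := by simp only [hc]; linarith
    refine ⟨min (c/2) (ε - dE x p), lt_min (by linarith) hδ1, fun y hy => ?_⟩
    obtain ⟨-, hyb⟩ := hy
    have hyb2 : y ∈ eball p (c/2) :=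
      mem_eball.mpr (lt_of_lt_of_le (mem_eball.mp hyb) (min_le_left _ _))
    have hyb3 : y ∈ eball p (ε - dE x p) :=
      mem_eball.mpr (lt_of_lt_of_le (mem_eball.mp hyb) (min_le_right _ _))
    have ht : |dtime p y| < c/2 := lt_of_le_of_lt (abs_dtime_le p y) (mem_eball.mp hyb2)
    have hr : dspace p y < c/2 := lt_of_le_of_lt (dspace_le p y) (mem_eball.mp hyb2)
    refine ⟨mem_spaceCone.mpr (Or.inr ?_), hsub1 hyb3⟩
    have h1 : |dtime x y| ≤ |dtime x p| + |dtime p y| := by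
      rw [dtime_add x p y]; exact abs_add_le _ _
    have h2 := dspace_lower x p y
    simp only [hc] at *
    linarith [abs_nonneg (dtime x p)]

/-- Pointwise criterion for openness in a generated topology. -/
lemma genOpen_of_pointwise (𝔅 : Set (Set Mink)) (U : Set Mink)
    (h : ∀ p ∈ U, ∃ S ∈ 𝔅, p ∈ S ∧ S ⊆ U) :
    (TopologicalSpace.generateFrom 𝔅).IsOpen U := by
  have hU : U = ⋃₀ {S | S ∈ 𝔅 ∧ S ⊆ U} := by
    apply Set.Subset.antisymm
    · intro p hp; obtain ⟨S, hS, hpS, hSU⟩ := h p hp; exact ⟨S, ⟨hS, hSU⟩, hpS⟩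
    · rintro p ⟨S, ⟨-, hSU⟩, hpS⟩; exact hSU hpS
  rw [hU]
  exact TopologicalSpace.GenerateOpen.sUnion _ fun S hS => .basic S hS.1

lemma not_causal_fwd {x y : Mink} (h : ¬ Causal x y) : dtime x y < dspace x y := by
  unfold Causal at h; exact not_le.mp h

/-- complement of `J⁺(x) \ {x}` is ZS-open. -/
lemma ZS_open_compl_plus (x : Mink) :
    ZS.IsOpen (Set.univ \ (Jplus x \ {x})) := by
  apply genOpen_of_pointwise
  intro p hp
  have hp' : p = x ∨ ¬ Causal x p := by
    rcases hp with ⟨-, h2⟩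
    by_cases hpx : p = x
    · exact Or.inl hpx
    · exact Or.inr fun hc => h2 ⟨hc, hpx⟩
  rcases hp' with rfl | hpc
  · refine ⟨spaceCone p ∩ eball p 1, ⟨p, 1, one_pos, rfl⟩,
      ⟨mem_spaceCone.mpr (Or.inl rfl), mem_eball_self one_pos⟩, ?_⟩
    rintro y ⟨hy1, -⟩
    refine ⟨trivial, ?_⟩
    rintro ⟨hc, hyx⟩
    rcases mem_spaceCone.mp hy1 with h | h
    · exact hyx h
    · have hc' : dspace p y ≤ dtime p y := hc
      have := le_abs_self (dtime p y)
      linarith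
  · have hlt : dtime x p < dspace x p := not_causal_fwd hpc
    set δ := (dspace x p - dtime x p) / 2 with hδdef
    have hδ : 0 < δ := by simp only [hδdef]; linarith
    refine ⟨spaceCone p ∩ eball p δ, ⟨p, δ, hδ, rfl⟩,
      ⟨mem_spaceCone.mpr (Or.inl rfl), mem_eball_self hδ⟩, ?_⟩
    rintro y ⟨-, hyb⟩
    refine ⟨trivial, ?_⟩
    rintro ⟨hc, -⟩
    have hc' : dspace x y ≤ dtime x y := hc
    have ht : |dtime p y| < δ := lt_of_le_of_lt (abs_dtime_le p y) (mem_eball.mp hyb)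
    have hr : dspace p y < δ := lt_of_le_of_lt (dspace_le p y) (mem_eball.mp hyb)
    have h1 : dtime x y ≤ dtime x p + |dtime p y| := by
      rw [dtime_add x p y]; linarith [le_abs_self (dtime p y)]
    have h2 := dspace_lower x p y
    simp only [hδdef] at *
    linarith

/-- complement of `J⁻(x) \ {x}` is ZS-open. -/
lemma ZS_open_compl_minus (x : Mink) :
    ZS.IsOpen (Set.univ \ (Jminus x \ {x})) := by
  apply genOpen_of_pointwise
  intro p hp
  have hp' : p = x ∨ ¬ Causal p x := by
    rcases hp with ⟨-, h2⟩
    by_cases hpx : p = x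
    · exact Or.inl hpx
    · exact Or.inr fun hc => h2 ⟨hc, hpx⟩
  rcases hp' with rfl | hpc
  · refine ⟨spaceCone p ∩ eball p 1, ⟨p, 1, one_pos, rfl⟩,
      ⟨mem_spaceCone.mpr (Or.inl rfl), mem_eball_self one_pos⟩, ?_⟩
    rintro y ⟨hy1, -⟩
    refine ⟨trivial, ?_⟩
    rintro ⟨hc, hyx⟩
    rcases mem_spaceCone.mp hy1 with h | h
    · exact hyx h
    · have hc' : dspace y p ≤ dtime y p := hc
      have e1 : dtime y p = -dtime p y := by simp [dtime]
      have e2 : dspace y p = dspace p y := dspace_comm y p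
      have := neg_le_abs (dtime p y)
      rw [e1, e2] at hc'
      linarith
  · have hlt : dtime p x < dspace p x := not_causal_fwd hpc
    have e1 : dtime p x = -dtime x p := by simp [dtime]
    have e2 : dspace p x = dspace x p := dspace_comm p x
    rw [e1, e2] at hlt
    set δ := (dspace x p + dtime x p) / 2 with hδdef
    have hδ : 0 < δ := by simp only [hδdef]; linarith
    refine ⟨spaceCone p ∩ eball p δ, ⟨p, δ, hδ, rfl⟩,
      ⟨mem_spaceCone.mpr (Or.inl rfl), mem_eball_self hδ⟩, ?_⟩
    rintro y ⟨-, hyb⟩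
    refine ⟨trivial, ?_⟩
    rintro ⟨hc, -⟩
    have hc' : dspace y x ≤ dtime y x := hc
    have e3 : dtime y x = -dtime x y := by simp [dtime]
    have e4 : dspace y x = dspace x y := dspace_comm y x
    rw [e3, e4] at hc'
    have ht : |dtime p y| < δ := lt_of_le_of_lt (abs_dtime_le p y) (mem_eball.mp hyb)
    have hr : dspace p y < δ := lt_of_le_of_lt (dspace_le p y) (mem_eball.mp hyb)
    have h1 : -dtime x y ≤ -dtime x p + |dtime p y| := by
      rw [dtime_add x p y]; linarith [neg_le_abs (dtime p y)]
    have h2 := dspace_lower x p y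
    simp only [hδdef] at *
    linarith

/-- Every Euclidean-open set is ZS-open. -/
lemma ZS_open_of_TE (U : Set Mink) (hU : TE.IsOpen U) : ZS.IsOpen U := by
  apply genOpen_of_pointwise
  intro p hp
  obtain ⟨r, hr, hball⟩ := Metric.isOpen_iff.mp hU p hp
  refine ⟨spaceCone p ∩ eball p r, ⟨p, r, hr, rfl⟩,
    ⟨mem_spaceCone.mpr (Or.inl rfl), mem_eball_self hr⟩, ?_⟩
  rintro y ⟨-, hyb⟩
  apply hball
  rw [Metric.mem_ball, Prod.dist_eq, Real.dist_eq, dist_eq_norm]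
  have ht : |dtime p y| < r := lt_of_le_of_lt (abs_dtime_le p y) (mem_eball.mp hyb)
  have hr2 : dspace p y < r := lt_of_le_of_lt (dspace_le p y) (mem_eball.mp hyb)
  unfold dtime at ht; unfold dspace at hr2
  exact max_lt ht hr2

/-- `eball` is Euclidean-open. -/
lemma TE_open_eball (x : Mink) (ε : ℝ) : TE.IsOpen (eball x ε) := by
  have hc : Continuous fun y : Mink => Real.sqrt ((y.1 - x.1) ^ 2 + ‖y.2 - x.2‖ ^ 2) := by
    fun_prop
  exact isOpen_Iio.preimage hc

/-- `spaceCone x` is Tll-open. -/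
lemma Tll_open_spaceCone (x : Mink) : Tll.IsOpen (spaceCone x) := by
  have heq : spaceCone x =
      (Set.univ \ (Jplus x \ {x})) ∩ (Set.univ \ (Jminus x \ {x})) := by
    ext y
    simp only [mem_spaceCone, Set.mem_inter_iff, Set.mem_diff, Set.mem_univ, true_and,
      Jplus, Jminus, Set.mem_setOf_eq, Set.mem_singleton_iff, not_and, not_not]
    constructor
    · rintro (rfl | h)
      · exact ⟨fun _ => rfl, fun _ => rfl⟩
      · constructor
        · intro hc
          exfalso
          have hc' : dspace x y ≤ dtime x y := hc
          have := le_abs_self (dtime x y)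
          linarith
        · intro hc
          exfalso
          have hc' : dspace y x ≤ dtime y x := hc
          have e1 : dtime y x = -dtime x y := by simp [dtime]
          have e2 : dspace y x = dspace x y := dspace_comm y x
          rw [e1, e2] at hc'
          have := neg_le_abs (dtime x y)
          linarith
    · rintro ⟨h1, h2⟩
      by_cases hyx : y = x
      · exact Or.inl hyx
      · right
        have hc1 : ¬ Causal x y := fun hc => hyx (h1 hc)
        have hc2 : ¬ Causal y x := fun hc => hyx (h2 hc)
        have g1 := not_causal_fwd hc1
        have g2 := not_causal_fwd hc2
        have e1 : dtime y x = -dtime x y := by simp [dtime]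
        have e2 : dspace y x = dspace x y := dspace_comm y x
        rw [e1, e2] at g2
        rw [abs_lt]; constructor <;> linarith
  rw [heq]
  exact TopologicalSpace.GenerateOpen.inter _ _
    (.basic _ (Or.inl ⟨x, rfl⟩)) (.basic _ (Or.inr ⟨x, rfl⟩))

end SCaux
open SCaux in
/-- The family of bounded space cones is a topological basis, and the topology `Z^S` it
generates equals the intersection topology of `T^≪` and the Euclidean topology. -/
theorem boundedSpaceCones_basis_and_ZS_eq_intersection :
    (⋃₀ BasisS = Set.univ ∧
      ∀ S1 ∈ BasisS, ∀ S2 ∈ BasisS, ∀ p ∈ S1 ∩ S2, ∃ S ∈ BasisS, p ∈ S ∧ S ⊆ S1 ∩ S2) ∧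
    ZS = TopologicalSpace.generateFrom
      {S : Set Mink | ∃ V U : Set Mink, Tll.IsOpen V ∧ TE.IsOpen U ∧ S = V ∩ U} := by
  refine ⟨⟨?_, ?_⟩, ?_⟩
  · -- cover
    apply Set.eq_univ_of_forall
    intro x
    exact ⟨spaceCone x ∩ eball x 1, ⟨x, 1, one_pos, rfl⟩,
      mem_spaceCone.mpr (Or.inl rfl), mem_eball_self one_pos⟩
  · -- basis criterion
    rintro S1 ⟨x1, ε1, hε1, rfl⟩ S2 ⟨x2, ε2, hε2, rfl⟩ p ⟨hp1, hp2⟩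
    obtain ⟨δ1, hδ1, hsub1⟩ := key hp1
    obtain ⟨δ2, hδ2, hsub2⟩ := key hp2
    refine ⟨spaceCone p ∩ eball p (min δ1 δ2), ⟨p, min δ1 δ2, lt_min hδ1 hδ2, rfl⟩,
      ⟨mem_spaceCone.mpr (Or.inl rfl), mem_eball_self (lt_min hδ1 hδ2)⟩, ?_⟩
    intro y hy
    have hy1 : y ∈ spaceCone p ∩ eball p δ1 :=
      ⟨hy.1, mem_eball.mpr (lt_of_lt_of_le (mem_eball.mp hy.2) (min_le_left _ _))⟩
    have hy2 : y ∈ spaceCone p ∩ eball p δ2 :=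
      ⟨hy.1, mem_eball.mpr (lt_of_lt_of_le (mem_eball.mp hy.2) (min_le_right _ _))⟩
    exact ⟨hsub1 hy1, hsub2 hy2⟩
  · -- topology equality
    have hTll : ∀ V : Set Mink, Tll.IsOpen V → ZS.IsOpen V := by
      intro V hV
      induction hV with
      | basic s hs =>
        rcases hs with ⟨x, rfl⟩ | ⟨x, rfl⟩
        · exact ZS_open_compl_plus x
        · exact ZS_open_compl_minus x
      | univ => exact TopologicalSpace.GenerateOpen.univ
      | inter s t _ _ ihs iht => exact TopologicalSpace.GenerateOpen.inter _ _ ihs iht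
      | sUnion S _ ih => exact TopologicalSpace.GenerateOpen.sUnion _ ih
    apply le_antisymm
    · apply le_generateFrom
      rintro s ⟨V, U, hV, hU, rfl⟩
      exact TopologicalSpace.GenerateOpen.inter _ _ (hTll V hV) (ZS_open_of_TE U hU)
    · apply le_generateFrom
      rintro S ⟨x, ε, hε, rfl⟩
      exact TopologicalSpace.GenerateOpen.basic _
        ⟨spaceCone x, eball x ε, Tll_open_spaceCone x, TE_open_eball x ε, rfl⟩
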